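/- Let R be a two-sided Noetherian ring, ω a finitely generated R-module with fadim_R(ω) ≥ n+2 and Ext^i_R(ω,ω)=0 for 1 ≤ i ≤ n, and let 0 → M → X → N → 0 be a short exact sequence of finitely generated R-modules with X ∈ add(ω) such that Hom_R(X,ω) → Hom_R(M,ω) is surjective. Then M is ω-n-torsionfree if and only if N is ω-(n-1)-torsionfree. -/

import Mathlib

open CategoryTheory

noncomputable section

/-- `Ext^n_A(M, N) = 0`, via Mathlib's `Ext` for the `ℤ`-linear abelian
category of left `A`-modules. -/
def ExtVanish (A : Type) [Ring A] (n : ℕ) (M N : Type) [AddCommGroup M] [Module A M]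
    [AddCommGroup N] [Module A N] : Prop :=
  Subsingleton (((Ext ℤ (ModuleCat.{0} A) n).obj (Opposite.op (ModuleCat.of A M))).obj
    (ModuleCat.of A N))

/-- `X` belongs to `add ω`: `X` is a direct summand of a finite direct sum of
copies of `ω`. -/
def MemAdd (A : Type) [Ring A] (ω : Type) [AddCommGroup ω] [Module A ω]
    (X : Type) [AddCommGroup X] [Module A X] : Prop :=
  ∃ (n : ℕ) (i : X →ₗ[A] (Fin n → ω)) (p : (Fin n → ω) →ₗ[A] X), ∀ x, p (i x) = x

/-- `f : M → X` is a left `add ω`-approximation of `M`: every map from `M` to a module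
in `add ω` factors through `f`. -/
def IsLeftApprox (A : Type) [Ring A] (ω : Type) [AddCommGroup ω] [Module A ω]
    {M X : Type} [AddCommGroup M] [Module A M] [AddCommGroup X] [Module A X]
    (f : M →ₗ[A] X) : Prop :=
  ∀ (Z : Type) [AddCommGroup Z] [Module A Z], MemAdd A ω Z →
    ∀ g : M →ₗ[A] Z, ∃ h : X →ₗ[A] Z, h.comp f = g

/-- There is an exact sequence `0 → M → ω₁ → ⋯ → ωₙ` with each `ωᵢ ∈ add ω` and each
`Im fᵢ ↪ ωᵢ` a left `add ω`-approximation.  Applied to `M = A` this says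
`fadim_A ω ≥ n`; by Huang's theorem, applied to a module `M` it says exactly that
`M` is `ω`-`n`-torsionfree. -/
def ApproxChain (A : Type) [Ring A] (ω : Type) [AddCommGroup ω] [Module A ω] :
    ℕ → ModuleCat.{0} A → Prop
  | 0, _ => True
  | n + 1, M =>
    ∃ (X : ModuleCat.{0} A) (f : M →ₗ[A] X), MemAdd A ω X ∧ Function.Injective f ∧
      IsLeftApprox A ω f ∧ ApproxChain A ω n (ModuleCat.of A (X ⧸ LinearMap.range f))

variable {A : Type} [Ring A] {ω : Type} [AddCommGroup ω] [Module A ω]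

/-- A map that factors all maps to `ω` through itself factors all maps to `add ω`. -/
lemma isLeftApprox_of_omega {M X : Type} [AddCommGroup M] [Module A M]
    [AddCommGroup X] [Module A X] (f : M →ₗ[A] X)
    (h : ∀ u : M →ₗ[A] ω, ∃ v : X →ₗ[A] ω, v.comp f = u) : IsLeftApprox A ω f := by
  intro Z _ _ hZ g
  obtain ⟨m, i, p, hpi⟩ := hZ
  choose v hv using fun k : Fin m =>
    h ((LinearMap.proj k).comp ((i.comp g : M →ₗ[A] (Fin m → ω))))
  refine ⟨p.comp (LinearMap.pi v), ?_⟩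
  ext x
  have h2 : (LinearMap.pi v) (f x) = i (g x) := by
    funext k
    have := congrArg (fun t => t x) (hv k)
    simpa using this
  show p ((LinearMap.pi v) (f x)) = g x
  rw [h2, hpi]

lemma memAdd_prod {W W' : Type} [AddCommGroup W] [Module A W] [AddCommGroup W'] [Module A W']
    (h : MemAdd A ω W) (h' : MemAdd A ω W') : MemAdd A ω (W × W') := by
  obtain ⟨a, i, p, hpi⟩ := h
  obtain ⟨b, i', p', hpi'⟩ := h'
  -- (Fin a → ω) × (Fin b → ω) ≃ₗ (Fin (a+b) → ω)
  let e : ((Fin a → ω) × (Fin b → ω)) ≃ₗ[A] (Fin (a + b) → ω) :=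
    (LinearEquiv.sumArrowLequivProdArrow (Fin a) (Fin b) A ω).symm.trans
      (LinearEquiv.funCongrLeft A ω finSumFinEquiv.symm)
  refine ⟨a + b, e.toLinearMap.comp (LinearMap.prodMap i i'),
    (LinearMap.prodMap p p').comp e.symm.toLinearMap, ?_⟩
  rintro ⟨w, w'⟩
  simp [hpi w, hpi' w']

lemma approxChain_of_equiv {k : ℕ} {M M' : Type} [AddCommGroup M] [Module A M]
    [AddCommGroup M'] [Module A M'] (e : M ≃ₗ[A] M')
    (h : ApproxChain A ω k (ModuleCat.of A M)) : ApproxChain A ω k (ModuleCat.of A M') := by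
  induction k generalizing M M' with
  | zero => trivial
  | succ k ih =>
    obtain ⟨X, f, hmem, hinj, happ, hrest⟩ := h
    refine ⟨X, f.comp e.symm.toLinearMap, hmem, ?_, ?_, ?_⟩
    · exact hinj.comp e.symm.injective
    · intro Z _ _ hZ g
      obtain ⟨h0, hh0⟩ := happ Z hZ (g.comp e.toLinearMap)
      refine ⟨h0, ?_⟩
      ext x
      have h3 := congrArg (fun t => t (e.symm x)) hh0
      simp only [LinearMap.comp_apply, LinearEquiv.coe_coe] at h3
      exact h3.trans (congrArg g (e.apply_symm_apply x))
    · have hr : LinearMap.range (f.comp e.symm.toLinearMap) = LinearMap.range f := by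
        rw [LinearMap.range_comp, LinearEquiv.range, Submodule.map_top]
      exact ih (Submodule.quotEquivOfEq _ _ hr.symm) hrest

/-- A short exact sequence with a retraction splits. -/
def equivProdOfRetract {V W C : Type} [AddCommGroup V] [Module A V]
    [AddCommGroup W] [Module A W] [AddCommGroup C] [Module A C]
    (i : W →ₗ[A] V) (p : V →ₗ[A] C) (r : V →ₗ[A] W)
    (hri : ∀ w, r (i w) = w) (hker : LinearMap.ker p = LinearMap.range i)
    (hp : Function.Surjective p) : V ≃ₗ[A] W × C := by
  refine LinearEquiv.ofBijective (LinearMap.prod r p) ⟨?_, ?_⟩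
  · intro v v' hvv'
    have h1 : r v = r v' := congrArg Prod.fst hvv'
    have h2 : p v = p v' := congrArg Prod.snd hvv'
    have : v - v' ∈ LinearMap.ker p := by simp [LinearMap.mem_ker, map_sub, h2]
    rw [hker] at this
    obtain ⟨w, hw⟩ := this
    have : r (v - v') = 0 := by simp [map_sub, h1]
    rw [← hw, hri] at this
    rw [this, map_zero] at hw
    exact sub_eq_zero.mp hw.symm
  · rintro ⟨w, c⟩
    obtain ⟨v, hv⟩ := hp c
    refine ⟨v + i (w - r v), ?_⟩
    have hpi : p (i (w - r v)) = 0 := by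
      have : i (w - r v) ∈ LinearMap.ker p := by rw [hker]; exact ⟨_, rfl⟩
      simpa [LinearMap.mem_ker] using this
    have h1 : r (v + i (w - r v)) = w := by
      rw [map_add, hri]; abel
    have h2 : p (v + i (w - r v)) = c := by
      rw [map_add, hpi, add_zero, hv]
    show (r (v + i (w - r v)), p (v + i (w - r v))) = (w, c)
    rw [h1, h2]

lemma approxChain_prod_left {k : ℕ} {W C : Type} [AddCommGroup W] [Module A W]
    [AddCommGroup C] [Module A C] (hW : MemAdd A ω W)
    (h : ApproxChain A ω k (ModuleCat.of A C)) :
    ApproxChain A ω k (ModuleCat.of A (W × C)) := by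
  induction k generalizing W C with
  | zero => trivial
  | succ k ih =>
    obtain ⟨X₂, f₂, hmem, hinj, happ, hrest⟩ := h
    refine ⟨ModuleCat.of A (W × X₂), LinearMap.prodMap LinearMap.id f₂, memAdd_prod hW hmem,
      ?_, ?_, ?_⟩
    · exact Function.Injective.prodMap (fun a b hab => hab) hinj
    · intro Z _ _ hZ g
      obtain ⟨h₂, hh₂⟩ := happ Z hZ (g.comp (LinearMap.inr A W C))
      refine ⟨(g.comp (LinearMap.inl A W C)).comp (LinearMap.fst A W X₂)
        + h₂.comp (LinearMap.snd A W X₂), ?_⟩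
      refine LinearMap.ext fun wc => ?_
      obtain ⟨w, c⟩ := wc
      have h4 := congrArg (fun t => t c) hh₂
      simp only [LinearMap.comp_apply] at h4
      show g (w, 0) + h₂ (f₂ c) = g (w, c)
      rw [h4]
      show g (w, 0) + g (0, c) = g (w, c)
      rw [← map_add, Prod.mk_add_mk, add_zero, zero_add]
    · -- cokernel of id × f₂ is cokernel of f₂
      set F := LinearMap.prodMap (LinearMap.id : W →ₗ[A] W) f₂ with hF
      have hsur : Function.Surjective
          ((LinearMap.range f₂).mkQ.comp (LinearMap.snd A W X₂)) :=
        (Submodule.mkQ_surjective _).comp fun x => ⟨(0, x), rfl⟩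
      have hkereq : LinearMap.range F
          = LinearMap.ker ((LinearMap.range f₂).mkQ.comp (LinearMap.snd A W X₂)) := by
        ext wx
        obtain ⟨w, x⟩ := wx
        simp only [LinearMap.mem_range, LinearMap.mem_ker, LinearMap.comp_apply,
          LinearMap.snd_apply, Submodule.mkQ_apply, Submodule.Quotient.mk_eq_zero]
        constructor
        · rintro ⟨⟨w', c⟩, hc⟩
          have : f₂ c = x := congrArg Prod.snd hc
          exact ⟨c, this⟩
        · rintro ⟨c, hc⟩
          exact ⟨(w, c), by simp [hF, hc]⟩
      have e : ((W × ↑X₂) ⧸ LinearMap.range F) ≃ₗ[A] (↑X₂ ⧸ LinearMap.range f₂) :=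
        (Submodule.quotEquivOfEq _ _ hkereq).trans
          (LinearMap.quotKerEquivOfSurjective _ hsur)
      exact approxChain_of_equiv e.symm hrest

lemma approxChain_of_prod {k : ℕ} {N W : Type} [AddCommGroup N] [Module A N]
    [AddCommGroup W] [Module A W] (hW : MemAdd A ω W)
    (h : ApproxChain A ω k (ModuleCat.of A (N × W))) :
    ApproxChain A ω k (ModuleCat.of A N) := by
  induction k generalizing N W with
  | zero => trivial
  | succ k ih =>
    obtain ⟨X₁, f₁, hmem, hinj, happ, hrest⟩ := h
    set j : N →ₗ[A] ↑X₁ := f₁.comp (LinearMap.inl A N W) with hj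
    refine ⟨X₁, j, hmem, ?_, ?_, ?_⟩
    · exact hinj.comp fun a b hab => congrArg Prod.fst hab
    · intro Z _ _ hZ g
      obtain ⟨h₀, hh₀⟩ := happ Z hZ (g.comp (LinearMap.fst A N W))
      refine ⟨h₀, ?_⟩
      ext x
      have h4 := congrArg (fun t => t ((x, 0) : N × W)) hh₀
      simpa [hj] using h4
    · -- coker j ≃ W × coker f₁
      obtain ⟨h', hh'⟩ := happ W hW (LinearMap.snd A N W)
      have hker' : LinearMap.range j ≤ LinearMap.ker h' := by
        rintro x ⟨m, rfl⟩
        have h4 := congrArg (fun t => t ((m, 0) : N × W)) hh'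
        simpa [LinearMap.mem_ker, hj] using h4
      set r : (↑X₁ ⧸ LinearMap.range j) →ₗ[A] W := Submodule.liftQ _ h' hker' with hr
      set i : W →ₗ[A] (↑X₁ ⧸ LinearMap.range j) :=
        (LinearMap.range j).mkQ.comp (f₁.comp (LinearMap.inr A N W)) with hi
      have hle : LinearMap.range j ≤ LinearMap.range f₁ := by
        rintro x ⟨m, rfl⟩; exact ⟨(m, 0), rfl⟩
      set p : (↑X₁ ⧸ LinearMap.range j) →ₗ[A] (↑X₁ ⧸ LinearMap.range f₁) :=
        Submodule.mapQ _ _ LinearMap.id (by simpa using hle) with hp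
      have hri : ∀ w, r (i w) = w := by
        intro w
        have h4 := congrArg (fun t => t ((0, w) : N × W)) hh'
        simpa [hr, hi] using h4
      have hkerp : LinearMap.ker p = LinearMap.range i := by
        ext q
        obtain ⟨x, rfl⟩ := (LinearMap.range j).mkQ_surjective q
        simp only [LinearMap.mem_ker, LinearMap.mem_range]
        constructor
        · intro hx
          have hx' : x ∈ LinearMap.range f₁ := by
            have : p ((LinearMap.range j).mkQ x)
                = (LinearMap.range f₁).mkQ x := by
              simp [hp, Submodule.mapQ_apply]
            rw [this] at hx
            simpa [Submodule.Quotient.mk_eq_zero] using hx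
          obtain ⟨⟨m, w⟩, rfl⟩ := hx'
          refine ⟨w, ?_⟩
          show (LinearMap.range j).mkQ (f₁ (0, w)) = (LinearMap.range j).mkQ (f₁ (m, w))
          rw [← sub_eq_zero, ← map_sub, ← map_sub, Submodule.mkQ_apply,
            Submodule.Quotient.mk_eq_zero]
          refine ⟨-m, ?_⟩
          show f₁ (-m, 0) = f₁ ((0, w) - (m, w))
          congr 1
          rw [Prod.mk_sub_mk, zero_sub, sub_self]
        · rintro ⟨w, hw⟩
          rw [← hw]
          rw [hi]
          simp only [LinearMap.comp_apply, LinearMap.inr_apply, Submodule.mkQ_apply, hp,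
            Submodule.mapQ_apply, LinearMap.id_coe, id_eq]
          exact (Submodule.Quotient.mk_eq_zero _).mpr ⟨(0, w), rfl⟩
      have hpsurj : Function.Surjective p := by
        intro q
        obtain ⟨x, rfl⟩ := (LinearMap.range f₁).mkQ_surjective q
        exact ⟨(LinearMap.range j).mkQ x, by simp [hp, Submodule.mapQ_apply]⟩
      have e : (↑X₁ ⧸ LinearMap.range j) ≃ₗ[A] W × (↑X₁ ⧸ LinearMap.range f₁) :=
        equivProdOfRetract i p r hri hkerp hpsurj
      exact approxChain_of_equiv e.symm (approxChain_prod_left hW hrest)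

/-- Half of the Schanuel-type lemma: if `f'` factors through `f`, the cokernel of
`(f, f') : M → X × X'` is `(X ⧸ im f) × X'`. -/
def halfEquiv {M X X' : Type} [AddCommGroup M] [Module A M]
    [AddCommGroup X] [Module A X] [AddCommGroup X'] [Module A X']
    (f : M →ₗ[A] X) (f' : M →ₗ[A] X') (h : X →ₗ[A] X') (hh : h.comp f = f') :
    ((X × X') ⧸ LinearMap.range (f.prod f')) ≃ₗ[A] ((X ⧸ LinearMap.range f) × X') := by
  set Ψ : (X × X') →ₗ[A] ((X ⧸ LinearMap.range f) × X') :=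
    ((LinearMap.range f).mkQ.comp (LinearMap.fst A X X')).prod
      (LinearMap.snd A X X' - h.comp (LinearMap.fst A X X')) with hΨ
  have hΨapp : ∀ x x', Ψ (x, x') = ((LinearMap.range f).mkQ x, x' - h x) := fun x x' => rfl
  have hker : LinearMap.range (f.prod f') = LinearMap.ker Ψ := by
    ext z
    obtain ⟨x, x'⟩ := z
    simp only [LinearMap.mem_range, LinearMap.mem_ker, hΨapp, Prod.ext_iff,
      LinearMap.prod_apply, Function.prod]
    constructor
    · rintro ⟨m, h1, h2⟩
      have hfm := congrArg (fun t => t m) hh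
      simp only [LinearMap.comp_apply] at hfm
      constructor
      · show ((LinearMap.range f).mkQ x, x' - h x).1 = 0
        simp [← h1, Submodule.Quotient.mk_eq_zero]
      · show ((LinearMap.range f).mkQ x, x' - h x).2 = 0
        simp only [← h1, ← h2, hfm, sub_self]
    · rintro ⟨h1, h2⟩
      have hx : x ∈ LinearMap.range f := by
        have : ((LinearMap.range f).mkQ x) = 0 := h1
        simpa [Submodule.Quotient.mk_eq_zero] using this
      obtain ⟨m, rfl⟩ := hx
      refine ⟨m, ?_⟩
      have hfm := congrArg (fun t => t m) hh
      simp only [LinearMap.comp_apply] at hfm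
      have h2' : x' - h (f m) = 0 := h2
      refine ⟨rfl, ?_⟩
      show f' m = x'
      rw [← hfm]
      rw [sub_eq_zero] at h2'
      exact h2'.symm
  have hsurj : Function.Surjective Ψ := by
    rintro ⟨q, y⟩
    obtain ⟨x, rfl⟩ := (LinearMap.range f).mkQ_surjective q
    exact ⟨(x, y + h x), by rw [hΨapp]; simp⟩
  exact (Submodule.quotEquivOfEq _ _ hker).trans (LinearMap.quotKerEquivOfSurjective _ hsurj)

/-- Schanuel-type lemma for a pair of maps each factoring through the other. -/
def schanuelEquiv {M X X' : Type} [AddCommGroup M] [Module A M]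
    [AddCommGroup X] [Module A X] [AddCommGroup X'] [Module A X']
    (f : M →ₗ[A] X) (f' : M →ₗ[A] X')
    (h : X →ₗ[A] X') (hh : h.comp f = f')
    (h' : X' →ₗ[A] X) (hh' : h'.comp f' = f) :
    ((X ⧸ LinearMap.range f) × X') ≃ₗ[A] ((X' ⧸ LinearMap.range f') × X) := by
  let e : (X × X') ≃ₗ[A] (X' × X) := LinearEquiv.prodComm A X X'
  have hmap : (LinearMap.range (f.prod f')).map (e : (X × X') →ₗ[A] (X' × X))
      = LinearMap.range (f'.prod f) := by
    rw [Submodule.map_equiv_eq_comap_symm]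
    ext z
    obtain ⟨x', x⟩ := z
    simp only [Submodule.mem_comap, LinearMap.mem_range, LinearMap.prod_apply, Pi.prod,
      Prod.ext_iff]
    constructor
    · rintro ⟨m, h1, h2⟩; exact ⟨m, h2, h1⟩
    · rintro ⟨m, h1, h2⟩; exact ⟨m, h2, h1⟩
  exact (halfEquiv f f' h hh).symm.trans
    ((Submodule.Quotient.equiv (LinearMap.range (f.prod f')) (LinearMap.range (f'.prod f))
      e hmap).trans (halfEquiv f' f h' hh'))

/-- Let `R` be a two-sided Noetherian ring, `ω` a finitely generated
`R`-module with `fadim_R ω ≥ n + 2` and `Ext^i_R(ω, ω) = 0` for `1 ≤ i ≤ n`, and let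
`0 → M → X → N → 0` be a short exact sequence of finitely generated `R`-modules with
`X ∈ add ω` and `Hom_R(X, ω) → Hom_R(M, ω)` surjective.  Then `M` is
`ω`-`n`-torsionfree iff `N` is `ω`-`(n-1)`-torsionfree. -/
theorem torsionfree_recurrence
    (R : Type) [Ring R] [IsNoetherianRing R] [IsNoetherianRing Rᵐᵒᵖ]
    (ω : Type) [AddCommGroup ω] [Module R ω] [Module.Finite R ω] (n : ℕ) (hn : 1 ≤ n)
    (hfadim : ApproxChain R ω (n + 2) (ModuleCat.of R R))
    (hself : ∀ i, 1 ≤ i → i ≤ n → ExtVanish R i ω ω)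
    (M X N : Type) [AddCommGroup M] [Module R M] [Module.Finite R M]
    [AddCommGroup X] [Module R X] [Module.Finite R X]
    [AddCommGroup N] [Module R N] [Module.Finite R N]
    (f : M →ₗ[R] X) (g : X →ₗ[R] N)
    (hf : Function.Injective f) (hg : Function.Surjective g) (hfg : Function.Exact f g)
    (hX : MemAdd R ω X)
    (happrox : ∀ u : M →ₗ[R] ω, ∃ v : X →ₗ[R] ω, v.comp f = u) :
    ApproxChain R ω n (ModuleCat.of R M) ↔
      ApproxChain R ω (n - 1) (ModuleCat.of R N) := by
  have hfapprox : IsLeftApprox R ω f := isLeftApprox_of_omega f happrox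
  have hkg : LinearMap.ker g = LinearMap.range f := LinearMap.exact_iff.mp hfg
  have eN : (X ⧸ LinearMap.range f) ≃ₗ[R] N :=
    (Submodule.quotEquivOfEq _ _ hkg.symm).trans (LinearMap.quotKerEquivOfSurjective g hg)
  obtain ⟨k, rfl⟩ : ∃ k, n = k + 1 := ⟨n - 1, (Nat.succ_pred_eq_of_pos hn).symm⟩
  simp only [Nat.add_sub_cancel]
  constructor
  · intro h
    obtain ⟨X', f', hmem', hinj', happ', hchain'⟩ := h
    obtain ⟨hmap, hhmap⟩ := hfapprox ↑X' hmem' f'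
    obtain ⟨h'map, hh'map⟩ := happ' X hX f
    have e1 := schanuelEquiv f f' hmap hhmap h'map hh'map
    have s1 : ApproxChain R ω k (ModuleCat.of R (X × (↑X' ⧸ LinearMap.range f'))) :=
      approxChain_prod_left hX hchain'
    have s2 : ApproxChain R ω k (ModuleCat.of R (N × ↑X')) := by
      refine approxChain_of_equiv ?_ s1
      exact (LinearEquiv.prodComm R X _).trans
        (e1.symm.trans (eN.prodCongr (LinearEquiv.refl R ↑X')))
    exact approxChain_of_prod hmem' s2
  · intro h
    exact ⟨ModuleCat.of R X, f, hX, hf, hfapprox, approxChain_of_equiv eN.symm h⟩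

end
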